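/- Let α, β, a, b, c, d, p, q, r ∈ ℝ satisfy: αa + βb + p = 0, αb + βc + q = 0, and 6αp + 6βq + r = 0. Then 12·p·q·a·b − 6p²b² − 6q²a² + (r·a − 6p²)(c·a − b²) = 0. -/
import Mathlib


/-- Elimination of the parameters `α, β` in the system defining `Ψ₃(5)`:
if `αa + βb + p = 0`, `αb + βc + q = 0` and `6αp + 6βq + r = 0`, then
`12·p·q·a·b − 6p²b² − 6q²a² + (r·a − 6p²)(c·a − b²) = 0`. -/
theorem gauss_elimination_psi3
    (α β a b c d p q r : ℝ)
    (h1 : α * a + β * b + p = 0)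
    (h2 : α * b + β * c + q = 0)
    (h3 : 6 * α * p + 6 * β * q + r = 0) :
    12 * p * q * a * b - 6 * p ^ 2 * b ^ 2 - 6 * q ^ 2 * a ^ 2
      + (r * a - 6 * p ^ 2) * (c * a - b ^ 2) = 0 := by
  linear_combination (-6*a*c*p - 6*β*a*b*c - 6*α*a*b^2) * h1
    + (12*a*b*p - 6*a^2*q + 6*β*a*b^2 + 6*α*a^2*b) * h2 + (a^2*c - a*b^2) * h3
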